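/- Let A be a unital C*-algebra and u_{ij} ∈ A (1 ≤ i,j ≤ n) be self-adjoint elements. Assume that for all α_1, α_2 and all β_1,…,β_8 in {1,…,n}: δ_{β_1β_4}δ_{β_2β_3}δ_{β_3β_5}δ_{β_6β_8}·u_{β_2α_1}u_{β_7α_2} = Σ_{γ'_1,γ'_2=1}^n u_{β_1γ'_1}u_{β_2α_1}u_{β_3α_1}u_{β_4γ'_1}u_{β_5α_1}u_{β_6γ'_2}u_{β_7α_2}u_{β_8γ'_2}, and that for all α_1,…,α_5 and β_1, β_2 in {1,…,n}: Σ_{γ=1}^n u_{γα_1}u_{β_2α_2}u_{γα_3}u_{β_1α_4}u_{β_2α_5} = δ_{α_1α_3}δ_{α_2α_5}·u_{β_1α_4}u_{β_2α_2}. Then all the u_{ij} commute: u_{ij}u_{kl} = u_{kl}u_{ij} for all i,j,k,l. -/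

import Mathlib

open scoped Classical

namespace PartitionCstar

/-- A partition in `P(k,l)`: an equivalence relation (whose classes are the blocks)
on the disjoint union of `k` upper points and `l` lower points. -/
abbrev Partition (k l : ℕ) := Setoid (Fin k ⊕ Fin l)

/-- `labelsMatch p α β` holds iff, labelling the upper points by `α` and the lower points
by `β`, the strings (blocks) of `p` connect only equal indices. -/
def labelsMatch {n k l : ℕ} (p : Partition k l) (α : Fin k → Fin n) (β : Fin l → Fin n) :
    Prop :=
  ∀ x y : Fin k ⊕ Fin l, p.r x y → Sum.elim α β x = Sum.elim α β y

/-- The delta function `δ_p(α,β) ∈ {0,1}`. -/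
noncomputable def delta {n k l : ℕ} (p : Partition k l) (α : Fin k → Fin n)
    (β : Fin l → Fin n) : ℕ :=
  if labelsMatch p α β then 1 else 0

/-- The relations `R(p)` for a matrix of elements `u` of a unital ring:
`∑_γ δ_p(γ,β) u_{γ₁α₁}⋯u_{γₖαₖ} = ∑_{γ'} δ_p(α,γ') u_{β₁γ'₁}⋯u_{β_lγ'_l}`.
(For `k = 0` resp. `l = 0` the empty product is `1`, which yields the conventions
`δ_p(∅,β)·1` resp. `δ_p(α,∅)·1`.) -/
def SatisfiesRel {A : Type*} [Ring A] {n : ℕ} (u : Fin n → Fin n → A)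
    {k l : ℕ} (p : Partition k l) : Prop :=
  ∀ (α : Fin k → Fin n) (β : Fin l → Fin n),
    (∑ γ : Fin k → Fin n,
      if labelsMatch p γ β then (List.ofFn fun s => u (γ s) (α s)).prod else 0)
    = ∑ γ' : Fin l → Fin n,
      if labelsMatch p α γ' then (List.ofFn fun t => u (β t) (γ' t)).prod else 0

/-- The disjoint union of two set partitions. -/
def sumPartition {X Y : Type*} (p : Setoid X) (q : Setoid Y) : Setoid (X ⊕ Y) where
  r := Sum.LiftRel p.r q.r
  iseqv := by
    refine ⟨fun a => ?_, fun {a b} h => ?_, fun {a b c} h₁ h₂ => ?_⟩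
    · cases a with
      | inl x => exact Sum.LiftRel.inl (p.iseqv.refl x)
      | inr y => exact Sum.LiftRel.inr (q.iseqv.refl y)
    · cases h with
      | inl h => exact Sum.LiftRel.inl (p.iseqv.symm h)
      | inr h => exact Sum.LiftRel.inr (q.iseqv.symm h)
    · cases h₁ with
      | inl h₁ =>
        cases h₂ with
        | inl h₂ => exact Sum.LiftRel.inl (p.iseqv.trans h₁ h₂)
      | inr h₁ =>
        cases h₂ with
        | inr h₂ => exact Sum.LiftRel.inr (q.iseqv.trans h₁ h₂)

/-- Reindexing equivalence for the tensor product of partitions. -/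
def tensorEquiv (k l k' l' : ℕ) :
    (Fin (k + k') ⊕ Fin (l + l')) ≃ ((Fin k ⊕ Fin l) ⊕ (Fin k' ⊕ Fin l')) :=
  (Equiv.sumCongr finSumFinEquiv.symm finSumFinEquiv.symm).trans
    (Equiv.sumSumSumComm (Fin k) (Fin k') (Fin l) (Fin l'))

/-- The tensor product `p ⊗ q` of two partitions: horizontal concatenation,
blocks kept separate. -/
def tensor {k l k' l' : ℕ} (p : Partition k l) (q : Partition k' l') :
    Partition (k + k') (l + l') :=
  Setoid.comap (tensorEquiv k l k' l') (sumPartition p q)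

/-- The join of `p ∈ P(k,l)` and `q ∈ P(l,m)` on the `k` upper, `l` middle and
`m` lower points, identifying the lower points of `p` with the upper points of `q`. -/
def compJoin {k l m : ℕ} (q : Partition l m) (p : Partition k l) :
    Setoid (Fin k ⊕ (Fin l ⊕ Fin m)) :=
  (Setoid.comap (Equiv.sumAssoc (Fin k) (Fin l) (Fin m)).symm
      (sumPartition p (⊥ : Setoid (Fin m))))
    ⊔ sumPartition (⊥ : Setoid (Fin k)) q

/-- The composition `qp ∈ P(k,m)` of `q ∈ P(l,m)` below `p ∈ P(k,l)`: restriction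
of the join to the upper and lower points. -/
def comp {k l m : ℕ} (q : Partition l m) (p : Partition k l) : Partition k m :=
  Setoid.comap (Sum.map id Sum.inr : Fin k ⊕ Fin m → Fin k ⊕ (Fin l ⊕ Fin m))
    (compJoin q p)

/-- Middle points in the composition procedure. -/
def IsMiddle {k l m : ℕ} : Fin k ⊕ (Fin l ⊕ Fin m) → Prop
  | Sum.inr (Sum.inl _) => True
  | _ => False

/-- `rl q p`: the number of removed loops in the composition of `q` and `p`, i.e. the
number of blocks of the join consisting entirely of middle points. -/
noncomputable def rl {k l m : ℕ} (q : Partition l m) (p : Partition k l) : ℕ :=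
  Nat.card {c : Quotient (compJoin q p) //
    ∀ x : Fin k ⊕ (Fin l ⊕ Fin m), Quotient.mk (compJoin q p) x = c → IsMiddle x}

/-- The involution `p* ∈ P(l,k)`: turning `p ∈ P(k,l)` upside down. -/
def involution {k l : ℕ} (p : Partition k l) : Partition l k :=
  Setoid.comap (Equiv.sumComm (Fin l) (Fin k)) p

/-- The vertical reflection `p̃ ∈ P(k,l)`: reflecting `p` at the vertical axis. -/
def reflect {k l : ℕ} (p : Partition k l) : Partition k l :=
  Setoid.comap (Sum.map Fin.rev Fin.rev) p

/-- The setoid relating `x` and `y` (and nothing else besides equality). -/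
def pairSetoid {X : Type*} (x y : X) : Setoid X where
  r a b := a = b ∨ (a = x ∧ b = y) ∨ (a = y ∧ b = x)
  iseqv := by
    refine ⟨fun a => Or.inl rfl, fun {a b} h => ?_, fun {a b c} h₁ h₂ => ?_⟩
    · rcases h with rfl | ⟨ha, hb⟩ | ⟨ha, hb⟩
      · exact Or.inl rfl
      · exact Or.inr (Or.inr ⟨hb, ha⟩)
      · exact Or.inr (Or.inl ⟨hb, ha⟩)
    · rcases h₁ with rfl | h₁
      · exact h₂
      · rcases h₂ with rfl | h₂
        · exact Or.inr h₁
        · rcases h₁ with ⟨ha, hb⟩ | ⟨ha, hb⟩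
          · rcases h₂ with ⟨hb', hc⟩ | ⟨hb', hc⟩
            · exact Or.inr (Or.inl ⟨ha, hc⟩)
            · exact Or.inl (ha.trans hc.symm)
          · rcases h₂ with ⟨hb', hc⟩ | ⟨hb', hc⟩
            · exact Or.inl (ha.trans hc.symm)
            · exact Or.inr (Or.inr ⟨ha, hc⟩)

/-- Connecting (merging) the blocks of the points `x` and `y` of a partition. -/
def mergeBlocks {X : Type*} (p : Setoid X) (x y : X) : Setoid X :=
  p ⊔ pairSetoid x y

/-- Disconnecting the point `x` from its block and turning it into a singleton block. -/
def disconnect {X : Type*} (p : Setoid X) (x : X) : Setoid X where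
  r a b := a = b ∨ (p.r a b ∧ a ≠ x ∧ b ≠ x)
  iseqv := by
    refine ⟨fun a => Or.inl rfl, fun {a b} h => ?_, fun {a b c} h₁ h₂ => ?_⟩
    · rcases h with rfl | ⟨h, ha, hb⟩
      · exact Or.inl rfl
      · exact Or.inr ⟨p.iseqv.symm h, hb, ha⟩
    · rcases h₁ with rfl | ⟨h₁, ha, hb⟩
      · exact h₂
      · rcases h₂ with rfl | ⟨h₂, hb', hc⟩
        · exact Or.inr ⟨h₁, ha, hb⟩
        · exact Or.inr ⟨p.iseqv.trans h₁ h₂, ha, hc⟩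

/-- The partition of the lower points induced by `p ∈ P(0,l)`. -/
def lowerSetoid {l : ℕ} (p : Partition 0 l) : Setoid (Fin l) :=
  Setoid.comap Sum.inr p

/-- The reindexing map for inserting `m` points after position `t` among `l` points. -/
def insertMap (l m t : ℕ) (ht : t ≤ l) : Fin (l + m) → Fin l ⊕ Fin m := fun i =>
  if h1 : (i : ℕ) < t then Sum.inl ⟨i, lt_of_lt_of_le h1 ht⟩
  else if h2 : (i : ℕ) < t + m then Sum.inr ⟨(i : ℕ) - t, by omega⟩
  else Sum.inl ⟨(i : ℕ) - m, by have := i.isLt; omega⟩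

/-- The partition in `P(0, l+m)` obtained from `p ∈ P(0,l)` by inserting `q ∈ P(0,m)`
after the `t`-th lower point of `p` (blocks of `p` and `q` kept separate). -/
def insertAt {l m : ℕ} (p : Partition 0 l) (q : Partition 0 m) (t : ℕ) (ht : t ≤ l) :
    Partition 0 (l + m) :=
  Setoid.comap (Sum.elim (fun a : Fin 0 => a.elim0) (insertMap l m t ht))
    (sumPartition (lowerSetoid p) (lowerSetoid q))

/-- The reindexing map for the rotation moving the leftmost upper point to the
leftmost lower position. -/
def rotateMap (k l : ℕ) : Fin k ⊕ Fin (l + 1) → Fin (k + 1) ⊕ Fin l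
  | Sum.inl a => Sum.inl a.succ
  | Sum.inr b => Fin.cases (Sum.inl (0 : Fin (k + 1))) (fun b' => Sum.inr b') b

/-- The rotated version of `p ∈ P(k+1, l)`: the leftmost upper point becomes the new
leftmost lower point (staying in its block). -/
def rotate {k l : ℕ} (p : Partition (k + 1) l) : Partition k (l + 1) :=
  Setoid.comap (rotateMap k l) p

/-- The embedding of the remaining points after erasing the lower points `j` and `j+1`. -/
def eraseMap (k l j : ℕ) : Fin k ⊕ Fin l → Fin k ⊕ Fin (l + 2) :=
  Sum.map id fun b =>
    if (b : ℕ) < j then ⟨(b : ℕ), by have := b.isLt; omega⟩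
    else ⟨(b : ℕ) + 2, by have := b.isLt; omega⟩

/-- The partition in `P(k,l)` obtained from `p ∈ P(k,l+2)` by connecting the blocks of
the `j`-th and `(j+1)`-th lower points and then erasing those two points. -/
def erasePair {k l : ℕ} (p : Partition k (l + 2)) (j : Fin (l + 1)) : Partition k l :=
  Setoid.comap (eraseMap k l j)
    (mergeBlocks p (Sum.inr ⟨(j : ℕ), by have := j.isLt; omega⟩)
      (Sum.inr ⟨(j : ℕ) + 1, by have := j.isLt; omega⟩))

/-- The non-unital relations `R(p)` relative to a projection `P₀`:
`P₀·∑_γ δ_p(γ,β) u_{γ₁α₁}⋯u_{γₖαₖ} = (∑_{γ'} δ_p(α,γ') u_{β₁γ'₁}⋯u_{β_lγ'_l})·P₀`,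
with the conventions `δ_p(∅,β)·P₀` resp. `δ_p(α,∅)·P₀` for `k = 0` resp. `l = 0`. -/
def SatisfiesRelNU {A : Type*} [NonUnitalRing A] {n : ℕ} (P₀ : A)
    (u : Fin n → Fin n → A) {k l : ℕ} (p : Partition k l) : Prop :=
  ∀ (α : Fin k → Fin n) (β : Fin l → Fin n),
    (∑ γ : Fin k → Fin n,
      if labelsMatch p γ β then
        (List.ofFn fun s => u (γ s) (α s)).foldl (· * ·) P₀ else 0)
    = ∑ γ' : Fin l → Fin n,
      if labelsMatch p α γ' then
        (List.ofFn fun t => u (β t) (γ' t)).foldr (· * ·) P₀ else 0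

/-- The example from the introduction: the relations `R(p)` and `R(q)` of the two
displayed partitions imply that all generators commute. -/
theorem commutes_of_two_relations {A : Type*} [CStarAlgebra A] {n : ℕ}
    (u : Fin n → Fin n → A) (hsa : ∀ i j, IsSelfAdjoint (u i j))
    (hp : ∀ (a₁ a₂ : Fin n) (b : Fin 8 → Fin n),
      (if b 0 = b 3 ∧ b 1 = b 2 ∧ b 2 = b 4 ∧ b 5 = b 7 then
          u (b 1) a₁ * u (b 6) a₂ else 0)
        = ∑ g₁ : Fin n, ∑ g₂ : Fin n,
            u (b 0) g₁ * u (b 1) a₁ * u (b 2) a₁ * u (b 3) g₁ * u (b 4) a₁ *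
              u (b 5) g₂ * u (b 6) a₂ * u (b 7) g₂)
    (hq : ∀ (a : Fin 5 → Fin n) (b₁ b₂ : Fin n),
      (∑ g : Fin n, u g (a 0) * u b₂ (a 1) * u g (a 2) * u b₁ (a 3) * u b₂ (a 4))
        = if a 0 = a 2 ∧ a 1 = a 4 then u b₁ (a 3) * u b₂ (a 1) else 0) :
    ∀ i j k l, u i j * u k l = u k l * u i j := by
  -- Key intermediate relation: R((q ⊗ |³) ∘ p)
  have hq5 : ∀ (x₀ x₁ x₂ x₃ x₄ b₁ b₂ : Fin n),
      (∑ g : Fin n, u g x₀ * u b₂ x₁ * u g x₂ * u b₁ x₃ * u b₂ x₄)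
        = if x₀ = x₂ ∧ x₁ = x₄ then u b₁ x₃ * u b₂ x₁ else 0 :=
    fun x₀ x₁ x₂ x₃ x₄ b₁ b₂ => by
      have h := hq ![x₀, x₁, x₂, x₃, x₄] b₁ b₂; simp at h; convert h using 1; exact if_congr Iff.rfl rfl rfl
  have claim1 : ∀ (a₁ a₂ c₁ c₂ c₃ c₄ c₅ : Fin n),
      (if c₁ = c₂ ∧ c₃ = c₅ then u c₁ a₁ * u c₄ a₂ else 0)
        = ∑ g : Fin n, u c₁ a₁ * u c₂ a₁ * u c₃ g * u c₄ a₂ * u c₅ g := by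
    intro a₁ a₂ c₁ c₂ c₃ c₄ c₅
    have key : ∀ h : Fin n,
        (if h = c₁ ∧ c₂ = h ∧ h = c₂ ∧ c₃ = c₅ then u c₂ a₁ * u c₄ a₂ else 0)
          = ∑ g₁ : Fin n, ∑ g₂ : Fin n,
              u h g₁ * u c₂ a₁ * u h a₁ * u c₁ g₁ * u c₂ a₁ *
                u c₃ g₂ * u c₄ a₂ * u c₅ g₂ := by
      intro h
      have := hp a₁ a₂ ![h, c₂, h, c₁, c₂, c₃, c₄, c₅]
      simp at this; convert this using 1; exact if_congr Iff.rfl rfl rfl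
    have hsum := Finset.sum_congr rfl (fun h (_ : h ∈ Finset.univ) => key h)
    have hL : (∑ h : Fin n, if h = c₁ ∧ c₂ = h ∧ h = c₂ ∧ c₃ = c₅
          then u c₂ a₁ * u c₄ a₂ else 0)
        = if c₁ = c₂ ∧ c₃ = c₅ then u c₁ a₁ * u c₄ a₂ else 0 := by
      by_cases hP : c₁ = c₂ ∧ c₃ = c₅
      · obtain ⟨h12, h35⟩ := hP
        subst h12
        rw [if_pos ⟨rfl, h35⟩]
        have he : ∀ x : Fin n,
            (if x = c₁ ∧ c₁ = x ∧ x = c₁ ∧ c₃ = c₅ then u c₁ a₁ * u c₄ a₂ else 0)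
              = if x = c₁ then u c₁ a₁ * u c₄ a₂ else 0 := fun x => by
          by_cases hx : x = c₁ <;> simp [hx, h35]
        rw [Finset.sum_congr rfl fun x _ => he x]
        simp
      · rw [if_neg hP]
        refine Finset.sum_eq_zero fun h _ => ?_
        rw [if_neg]
        rintro ⟨rfl, h2, h3, h4⟩
        exact hP ⟨h2.symm, h4⟩
    have hR : (∑ h : Fin n, ∑ g₁ : Fin n, ∑ g₂ : Fin n,
          u h g₁ * u c₂ a₁ * u h a₁ * u c₁ g₁ * u c₂ a₁ *
            u c₃ g₂ * u c₄ a₂ * u c₅ g₂)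
        = ∑ g : Fin n, u c₁ a₁ * u c₂ a₁ * u c₃ g * u c₄ a₂ * u c₅ g := by
      rw [Finset.sum_comm]
      calc (∑ g₁ : Fin n, ∑ h : Fin n, ∑ g₂ : Fin n,
              u h g₁ * u c₂ a₁ * u h a₁ * u c₁ g₁ * u c₂ a₁ *
                u c₃ g₂ * u c₄ a₂ * u c₅ g₂)
          = ∑ g₁ : Fin n, ∑ g₂ : Fin n,
              (∑ h : Fin n, u h g₁ * u c₂ a₁ * u h a₁ * u c₁ g₁ * u c₂ a₁) *
                u c₃ g₂ * u c₄ a₂ * u c₅ g₂ := by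
            refine Finset.sum_congr rfl fun g₁ _ => ?_
            rw [Finset.sum_comm]
            refine Finset.sum_congr rfl fun g₂ _ => ?_
            simp [Finset.sum_mul]
        _ = ∑ g₁ : Fin n, ∑ g₂ : Fin n,
              (if g₁ = a₁ ∧ a₁ = a₁ then u c₁ g₁ * u c₂ a₁ else 0) *
                u c₃ g₂ * u c₄ a₂ * u c₅ g₂ := by
            refine Finset.sum_congr rfl fun g₁ _ => Finset.sum_congr rfl fun g₂ _ => ?_
            rw [hq5 g₁ a₁ a₁ g₁ a₁ c₁ c₂]
        _ = ∑ g : Fin n, u c₁ a₁ * u c₂ a₁ * u c₃ g * u c₄ a₂ * u c₅ g := by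
            rw [Finset.sum_comm]
            refine Finset.sum_congr rfl fun g₂ _ => ?_
            simp [ite_mul]
    exact hL.symm.trans (hsum.trans hR)
  intro i j k l
  have key2 := fun g : Fin n => claim1 j l g i g k i
  have hsum := Finset.sum_congr rfl (fun g (_ : g ∈ Finset.univ) => key2 g)
  have hL : (∑ g : Fin n, if g = i ∧ g = i then u g j * u k l else 0)
      = u i j * u k l := by simp
  have hR : (∑ g : Fin n, ∑ g₂ : Fin n, u g j * u i j * u g g₂ * u k l * u i g₂)
      = u k l * u i j := by
    rw [Finset.sum_comm]
    calc (∑ g₂ : Fin n, ∑ g : Fin n, u g j * u i j * u g g₂ * u k l * u i g₂)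
        = ∑ g₂ : Fin n, if j = g₂ ∧ j = g₂ then u k l * u i j else 0 := by
          refine Finset.sum_congr rfl fun g₂ _ => ?_
          rw [hq5 j j g₂ l g₂ k i]
      _ = u k l * u i j := by simp
  exact hL.symm.trans (hsum.trans hR)

end PartitionCstar
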